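/- Let α > 0 and a¹, a², a³ be real numbers, set vᴵ = √(α² + (aᴵ)²). Suppose 1/v¹ + 1/v² = 1/v³ and a¹/v¹ + a²/v² = a³/v³, and a² > a¹. Then a¹/v¹ = a³/(2v³) − √3·α/(2v³) and a²/v² = a³/(2v³) + √3·α/(2v³). -/

import Mathlib

private lemma mono_aux (α a1 a2 v1 v2 : ℝ) (hα : 0 < α) (hv1p : 0 < v1) (hv2p : 0 < v2)
    (hs1 : v1 ^ 2 = α ^ 2 + a1 ^ 2) (hs2 : v2 ^ 2 = α ^ 2 + a2 ^ 2) (hord : a1 < a2) :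
    a1 * v2 < a2 * v1 := by
  have hq1 : (a1*v2)^2 = a1^2*(α^2+a2^2) := by rw [mul_pow, hs2]
  have hq2 : (a2*v1)^2 = a2^2*(α^2+a1^2) := by rw [mul_pow, hs1]
  rcases le_or_gt 0 a1 with h1 | h1
  · have ha2 : 0 < a2 := lt_of_le_of_lt h1 hord
    have haa : a1^2 < a2^2 := by nlinarith
    have hsq : (a1*v2)^2 < (a2*v1)^2 := by
      rw [hq1, hq2]; nlinarith [mul_lt_mul_of_pos_right haa (pow_pos hα 2)]
    exact lt_of_pow_lt_pow_left₀ 2 (mul_pos ha2 hv1p).le hsq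
  · rcases le_or_gt 0 a2 with h2 | h2
    · calc a1*v2 < 0 := mul_neg_of_neg_of_pos h1 hv2p
        _ ≤ a2*v1 := mul_nonneg h2 hv1p.le
    · have haa : a2^2 < a1^2 := by nlinarith
      have hsq : (-(a2*v1))^2 < (-(a1*v2))^2 := by
        rw [neg_sq, neg_sq, hq1, hq2]
        nlinarith [mul_lt_mul_of_pos_right haa (pow_pos hα 2)]
      have hn : (0:ℝ) ≤ -(a1*v2) := by nlinarith [mul_pos hv1p hv2p]
      have := lt_of_pow_lt_pow_left₀ 2 hn hsq
      linarith

private lemma key_aux (x1 x2 y1 y2 : ℝ)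
    (hu1 : x1 ^ 2 + y1 ^ 2 = 1) (hu2 : x2 ^ 2 + y2 ^ 2 = 1)
    (hu3 : (x1 + x2) ^ 2 + (y1 + y2) ^ 2 = 1) :
    (x2 - x1) ^ 2 = 3 * (y1 + y2) ^ 2 := by
  have hds : (x2 - x1) * (x1 + x2) = (y1 - y2) * (y1 + y2) := by
    linear_combination hu2 - hu1
  linear_combination ((x2-x1)*(x1+x2)+(y1-y2)*(y1+y2)) * hds
    + (y1+y2)^2*(2*hu1 + 2*hu2 - hu3) - (x2-x1)^2*hu3

private lemma sqrt3_aux (D s : ℝ) (hD : 0 < D) (hs : 0 < s) (h : D ^ 2 = 3 * s ^ 2) :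
    D = Real.sqrt 3 * s := by
  have h3 : Real.sqrt 3 ^ 2 = 3 := Real.sq_sqrt (by norm_num)
  have h3p : 0 < Real.sqrt 3 := Real.sqrt_pos.mpr (by norm_num)
  nlinarith [sq_nonneg (D - Real.sqrt 3 * s), sq_nonneg (D + Real.sqrt 3 * s),
    mul_pos h3p hs]

theorem lemma12_second_half (α a1 a2 a3 v1 v2 v3 : ℝ) (hα : 0 < α)
    (hv1 : v1 = Real.sqrt (α ^ 2 + a1 ^ 2))
    (hv2 : v2 = Real.sqrt (α ^ 2 + a2 ^ 2))
    (hv3 : v3 = Real.sqrt (α ^ 2 + a3 ^ 2))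
    (hrel1 : 1 / v1 + 1 / v2 = 1 / v3)
    (hrel2 : a1 / v1 + a2 / v2 = a3 / v3)
    (hord : a1 < a2) :
    a1 / v1 = a3 / (2 * v3) - Real.sqrt 3 * α / (2 * v3) ∧
    a2 / v2 = a3 / (2 * v3) + Real.sqrt 3 * α / (2 * v3) := by
  have hp1 : (0:ℝ) < α ^ 2 + a1 ^ 2 := by positivity
  have hp2 : (0:ℝ) < α ^ 2 + a2 ^ 2 := by positivity
  have hp3 : (0:ℝ) < α ^ 2 + a3 ^ 2 := by positivity
  have hv1p : 0 < v1 := by rw [hv1]; exact Real.sqrt_pos.mpr hp1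
  have hv2p : 0 < v2 := by rw [hv2]; exact Real.sqrt_pos.mpr hp2
  have hv3p : 0 < v3 := by rw [hv3]; exact Real.sqrt_pos.mpr hp3
  have hs1 : v1 ^ 2 = α ^ 2 + a1 ^ 2 := by rw [hv1, Real.sq_sqrt hp1.le]
  have hs2 : v2 ^ 2 = α ^ 2 + a2 ^ 2 := by rw [hv2, Real.sq_sqrt hp2.le]
  have hs3 : v3 ^ 2 = α ^ 2 + a3 ^ 2 := by rw [hv3, Real.sq_sqrt hp3.le]
  clear hv1 hv2 hv3
  have hn1 : v1 ≠ 0 := ne_of_gt hv1p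
  have hn2 : v2 ≠ 0 := ne_of_gt hv2p
  have hn3 : v3 ≠ 0 := ne_of_gt hv3p
  have hu1 : (a1 / v1) ^ 2 + (α / v1) ^ 2 = 1 := by
    field_simp; linarith [hs1]
  have hu2 : (a2 / v2) ^ 2 + (α / v2) ^ 2 = 1 := by
    field_simp; linarith [hs2]
  have hu3 : (a3 / v3) ^ 2 + (α / v3) ^ 2 = 1 := by
    field_simp; linarith [hs3]
  have hsy : α / v1 + α / v2 = α / v3 := by
    rw [div_add_div _ _ hn1 hn2, div_eq_div_iff (by positivity) hn3]
    rw [div_add_div _ _ hn1 hn2, div_eq_div_iff (by positivity) hn3] at hrel1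
    linear_combination α * hrel1
  have hsx : a1 / v1 + a2 / v2 = a3 / v3 := hrel2
  have hord' : a1 / v1 < a2 / v2 := by
    rw [div_lt_div_iff₀ hv1p hv2p]
    exact mono_aux α a1 a2 v1 v2 hα hv1p hv2p hs1 hs2 hord
  have hu3' : (a1 / v1 + a2 / v2) ^ 2 + (α / v1 + α / v2) ^ 2 = 1 := by
    rw [hsx, hsy]; exact hu3
  have hkey := key_aux (a1 / v1) (a2 / v2) (α / v1) (α / v2) hu1 hu2 hu3'
  have hD : a2 / v2 - a1 / v1 = Real.sqrt 3 * (α / v1 + α / v2) :=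
    sqrt3_aux _ _ (by linarith) (by positivity) hkey
  rw [hsy] at hD
  constructor
  · have h : a1 / v1 = a3 / v3 / 2 - Real.sqrt 3 * (α / v3) / 2 := by linarith
    rw [h]; ring
  · have h : a2 / v2 = a3 / v3 / 2 + Real.sqrt 3 * (α / v3) / 2 := by linarith
    rw [h]; ring
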